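/- Let A be the star network matrix above with sensor node 1 and n ≥ 3. The minimal Frobenius norm δ(n) of a star-pattern-structured perturbation Δ for which (A+Δ, e₁^T) has an unobservable eigenvalue equals min{ a_{12}, a_{13}, …, a_{1n}, min_{2≤i<j≤n} |a_{ii} − a_{jj}|/√2 }, assuming all entries a_{ij} are positive. -/

import Mathlib

/-- Frobenius norm of a real matrix. -/
noncomputable def frobNorm {n : ℕ} (M : Matrix (Fin n) (Fin n) ℝ) : ℝ :=
  Real.sqrt (∑ i, ∑ j, (M i j) ^ 2)

/-- Star sparsity pattern: nonzero entries only on first row, first column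
and diagonal. -/
def starPattern {n : ℕ} (M : Matrix (Fin n) (Fin n) ℝ) : Prop :=
  ∀ i j : Fin n, i ≠ j → (i : ℕ) ≠ 0 → (j : ℕ) ≠ 0 → M i j = 0

private lemma entry_le_frob {n : ℕ} (M : Matrix (Fin n) (Fin n) ℝ) (i j : Fin n) :
    |M i j| ≤ frobNorm M := by
  rw [frobNorm, ← Real.sqrt_sq_eq_abs]
  apply Real.sqrt_le_sqrt
  calc M i j ^ 2 ≤ ∑ q, M i q ^ 2 :=
        Finset.single_le_sum (f := fun q => M i q ^ 2) (fun q _ => sq_nonneg _)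
          (Finset.mem_univ j)
    _ ≤ ∑ p, ∑ q, M p q ^ 2 :=
        Finset.single_le_sum (f := fun p => ∑ q, M p q ^ 2)
          (fun p _ => Finset.sum_nonneg fun q _ => sq_nonneg _) (Finset.mem_univ i)

private lemma two_diag_le_frob {n : ℕ} (M : Matrix (Fin n) (Fin n) ℝ) {i j : Fin n}
    (hij : i ≠ j) : Real.sqrt (M i i ^ 2 + M j j ^ 2) ≤ frobNorm M := by
  rw [frobNorm]
  apply Real.sqrt_le_sqrt
  calc M i i ^ 2 + M j j ^ 2
      ≤ (∑ q, M i q ^ 2) + ∑ q, M j q ^ 2 :=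
        add_le_add
          (Finset.single_le_sum (f := fun q => M i q ^ 2) (fun q _ => sq_nonneg _)
            (Finset.mem_univ i))
          (Finset.single_le_sum (f := fun q => M j q ^ 2) (fun q _ => sq_nonneg _)
            (Finset.mem_univ j))
    _ = ∑ p ∈ ({i, j} : Finset (Fin n)), ∑ q, M p q ^ 2 :=
        (Finset.sum_pair (f := fun p => ∑ q, M p q ^ 2) hij).symm
    _ ≤ ∑ p, ∑ q, M p q ^ 2 :=
        Finset.sum_le_sum_of_subset_of_nonneg (Finset.subset_univ _)
          (fun p _ _ => Finset.sum_nonneg fun q _ => sq_nonneg _)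

/-- For a star network with positive weights and sensor node 1,
the minimal Frobenius norm of a star-structured perturbation making the pair
`(A+Δ, e₁ᵀ)` unobservable equals
`min{ a_{12},…,a_{1n}, min_{i≠j} |a_{ii}−a_{jj}|/√2 }`. -/
theorem star_network_observability_radius (n : ℕ) (hn : 3 ≤ n)
    (A : Matrix (Fin n) (Fin n) ℝ) (hstar : starPattern A)
    (hposRow : ∀ j : Fin n, (j : ℕ) ≠ 0 → 0 < A ⟨0, by omega⟩ j)
    (hposCol : ∀ j : Fin n, (j : ℕ) ≠ 0 → 0 < A j ⟨0, by omega⟩)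
    (hposDiag : ∀ i : Fin n, 0 < A i i) :
    IsLeast
      {c : ℝ | ∃ Δ : Matrix (Fin n) (Fin n) ℝ, starPattern Δ ∧ c = frobNorm Δ ∧
        ∃ (lam : ℂ) (x : Fin n → ℂ), x ≠ 0 ∧ x ⟨0, by omega⟩ = 0 ∧
          ((A + Δ).map (Complex.ofReal)).mulVec x = lam • x}
      (sInf ({c : ℝ | ∃ j : Fin n, (j : ℕ) ≠ 0 ∧ c = A ⟨0, by omega⟩ j} ∪
        {c : ℝ | ∃ i j : Fin n, (i : ℕ) ≠ 0 ∧ (j : ℕ) ≠ 0 ∧ i ≠ j ∧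
          c = |A i i - A j j| / Real.sqrt 2})) := by
  have hz : (0 : ℕ) < n := by omega
  set i0 : Fin n := ⟨0, hz⟩ with hi0def
  set S1 : Set ℝ := {c : ℝ | ∃ j : Fin n, (j : ℕ) ≠ 0 ∧ c = A i0 j} with hS1
  set S2 : Set ℝ := {c : ℝ | ∃ i j : Fin n, (i : ℕ) ≠ 0 ∧ (j : ℕ) ≠ 0 ∧ i ≠ j ∧
      c = |A i i - A j j| / Real.sqrt 2} with hS2
  show IsLeast
      {c : ℝ | ∃ Δ : Matrix (Fin n) (Fin n) ℝ, starPattern Δ ∧ c = frobNorm Δ ∧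
        ∃ (lam : ℂ) (x : Fin n → ℂ), x ≠ 0 ∧ x i0 = 0 ∧
          ((A + Δ).map (Complex.ofReal)).mulVec x = lam • x} (sInf (S1 ∪ S2))
  -- finiteness, nonemptiness of the candidate set
  have hfin : (S1 ∪ S2).Finite := by
    apply Set.Finite.union
    · apply Set.Finite.subset (Set.finite_range (fun j : Fin n => A i0 j))
      rintro c ⟨j, _, rfl⟩; exact ⟨j, rfl⟩
    · apply Set.Finite.subset
        (Set.finite_range (fun p : Fin n × Fin n => |A p.1 p.1 - A p.2 p.2| / Real.sqrt 2))
      rintro c ⟨i, j, _, _, _, rfl⟩; exact ⟨(i, j), rfl⟩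
  have hj1 : ((⟨1, by omega⟩ : Fin n) : ℕ) ≠ 0 := by simp
  have hne : (S1 ∪ S2).Nonempty := ⟨A i0 ⟨1, by omega⟩, Or.inl ⟨⟨1, by omega⟩, hj1, rfl⟩⟩
  have hbdd : BddBelow (S1 ∪ S2) := hfin.bddBelow
  constructor
  · -- membership : the infimum is attained
    have hmem : sInf (S1 ∪ S2) ∈ S1 ∪ S2 := Set.Nonempty.csInf_mem hne hfin
    rcases hmem with ⟨j, hj0, hval⟩ | ⟨i, j, hi0', hj0, hij, hval⟩
    · -- cancel the (0,j) entry
      have hji0 : i0 ≠ j := by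
        intro h; apply hj0; rw [← h]
      refine ⟨fun p q => if p = i0 ∧ q = j then -(A i0 j) else 0, ?_, ?_,
        ((A j j : ℝ) : ℂ), (fun k => if k = j then 1 else 0), ?_, ?_, ?_⟩
      · intro p q _ hp0 _
        try dsimp only
        rw [if_neg]
        rintro ⟨rfl, -⟩
        exact hp0 rfl
      · rw [hval]; delta frobNorm
        have hinner : ∀ p : Fin n,
            (∑ q, (if p = i0 ∧ q = j then -(A i0 j) else 0) ^ 2)
              = if p = i0 then (A i0 j) ^ 2 else 0 := by
          intro p
          by_cases hp : p = i0
          · simp only [hp, true_and, if_pos rfl]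
            rw [Finset.sum_eq_single j]
            · simp
            · intro b _ hbj; simp [hbj]
            · simp
          · simp [hp]
        try dsimp only
        rw [Finset.sum_congr rfl (fun p _ => hinner p), Finset.sum_ite_eq' Finset.univ i0,
          if_pos (Finset.mem_univ i0), Real.sqrt_sq (le_of_lt (hposRow j hj0))]
      · intro h
        have := congrFun h j
        simp at this
      · try dsimp only
        rw [if_neg hji0]
      · funext p
        simp only [Matrix.mulVec, dotProduct, Matrix.map_apply, Matrix.add_apply,
          Pi.smul_apply, smul_eq_mul, Pi.add_apply]
        try dsimp only
        rw [Finset.sum_eq_single j]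
        · erw [Matrix.add_apply A]
          rw [if_pos rfl, mul_one]
          by_cases hp : p = j
          · have hpj : ¬(p = i0 ∧ j = j) := fun h => hji0 (hp ▸ h.1 ▸ rfl)
            rw [if_neg hpj, if_pos hp, mul_one, hp]
            push_cast
            ring
          · rw [if_neg hp, mul_zero]
            by_cases hp0 : p = i0
            · rw [if_pos ⟨hp0, rfl⟩, hp0]
              push_cast
              ring
            · have hpc : (p : ℕ) ≠ 0 := fun h => hp0 (Fin.ext h)
              rw [hstar p j hp hpc hj0, if_neg (fun h : p = i0 ∧ j = j => hp0 h.1)]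
              push_cast
              ring
        · intro b _ hbj
          rw [if_neg hbj, mul_zero]
        · simp
    · -- equalize two diagonal entries
      have hii0 : i0 ≠ i := by intro h; apply hi0'; rw [← h]
      have hji0 : i0 ≠ j := by intro h; apply hj0; rw [← h]
      have hAij : A i j = 0 := hstar i j hij hi0' hj0
      have hAji : A j i = 0 := hstar j i (Ne.symm hij) hj0 hi0'
      set m : ℝ := (A j j - A i i) / 2 with hm
      refine ⟨fun p q => if p = i ∧ q = i then m else if p = j ∧ q = j then -m else 0, ?_, ?_,
        (((A i i + A j j) / 2 : ℝ) : ℂ),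
        (fun k => if k = i then ((A i0 j : ℝ) : ℂ) else if k = j then -((A i0 i : ℝ) : ℂ) else 0),
        ?_, ?_, ?_⟩
      · intro p q hpq _ _
        try dsimp only
        rw [if_neg, if_neg]
        · rintro ⟨rfl, rfl⟩; exact hpq rfl
        · rintro ⟨rfl, rfl⟩; exact hpq rfl
      · rw [hval]; delta frobNorm
        have hinner : ∀ p : Fin n,
            (∑ q, (if p = i ∧ q = i then m else if p = j ∧ q = j then -m else 0) ^ 2)
              = if p = i then m ^ 2 else if p = j then m ^ 2 else 0 := by
          intro p
          by_cases hp : p = i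
          · rw [if_pos hp, Finset.sum_eq_single i]
            · rw [if_pos ⟨hp, rfl⟩]
            · intro b _ hbi
              rw [if_neg (fun h : p = i ∧ b = i => hbi h.2),
                if_neg (fun h : p = j ∧ b = j => hij (hp.symm.trans h.1))]
              simp
            · simp
          · by_cases hq : p = j
            · rw [if_neg hp, if_pos hq, Finset.sum_eq_single j]
              · rw [if_neg (fun h : p = i ∧ j = i => hp h.1), if_pos ⟨hq, rfl⟩]
                ring
              · intro b _ hbj
                rw [if_neg (fun h : p = i ∧ b = i => hp h.1),
                  if_neg (fun h : p = j ∧ b = j => hbj h.2)]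
                simp
              · simp
            · simp [hp, hq]
        try dsimp only
        rw [Finset.sum_congr rfl (fun p _ => hinner p)]
        rw [← Finset.sum_subset (Finset.subset_univ ({i, j} : Finset (Fin n)))]
        · rw [Finset.sum_pair hij, if_pos rfl, if_neg (fun h : j = i => hij h.symm), if_pos rfl]
          have hsq : m ^ 2 + m ^ 2 = (|A i i - A j j| / Real.sqrt 2) ^ 2 := by
            have habs : (|A i i - A j j| / Real.sqrt 2) ^ 2 = (A i i - A j j) ^ 2 / 2 := by
              rw [div_pow, sq_abs, Real.sq_sqrt (by norm_num : (0:ℝ) ≤ 2)]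
            rw [habs, hm]
            ring
          rw [hsq, Real.sqrt_sq (by positivity)]
        · intro q _ hq
          simp only [Finset.mem_insert, Finset.mem_singleton, not_or] at hq
          rw [if_neg hq.1, if_neg hq.2]
      · intro h
        have h1 : ((A i0 j : ℝ) : ℂ) = 0 := by simpa using congrFun h i
        exact (ne_of_gt (hposRow j hj0)) (by exact_mod_cast h1)
      · try dsimp only
        rw [if_neg hii0, if_neg hji0]
      · funext p
        simp only [Matrix.mulVec, dotProduct, Matrix.map_apply, Matrix.add_apply,
          Pi.smul_apply, smul_eq_mul, Pi.add_apply]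
        try dsimp only
        rw [← Finset.sum_subset (Finset.subset_univ ({i, j} : Finset (Fin n)))]
        · rw [Finset.sum_pair hij, if_pos rfl, if_neg (fun h : j = i => hij h.symm), if_pos rfl]
          erw [Matrix.add_apply A, Matrix.add_apply A]
          by_cases hp : p = i
          · rw [if_pos ⟨hp, rfl⟩, if_neg (fun h : p = i ∧ j = i => hij h.2.symm),
              if_neg (fun h : p = j ∧ j = j => hij (hp ▸ h.1 ▸ rfl)), if_pos hp, hp, hAij]
            push_cast [hm]
            ring
          · by_cases hq : p = j
            · rw [if_neg (fun h : p = i ∧ i = i => hp h.1),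
                if_neg (fun h : p = j ∧ i = j => hij h.2),
                if_neg (fun h : p = i ∧ j = i => hp h.1), if_pos ⟨hq, rfl⟩,
                if_neg hp, if_pos hq, hq, hAji]
              push_cast [hm]
              ring
            · rw [if_neg (fun h : p = i ∧ i = i => hp h.1),
                if_neg (fun h : p = j ∧ i = j => hq h.1),
                if_neg (fun h : p = i ∧ j = i => hp h.1),
                if_neg (fun h : p = j ∧ j = j => hq h.1),
                if_neg hp, if_neg hq, mul_zero]
              by_cases hp0 : p = i0
              · rw [hp0]
                push_cast
                ring
              · have hpc : (p : ℕ) ≠ 0 := fun h => hp0 (Fin.ext h)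
                rw [hstar p i hp hpc hi0', hstar p j hq hpc hj0]
                push_cast
                ring
        · intro q _ hq
          simp only [Finset.mem_insert, Finset.mem_singleton, not_or] at hq
          rw [if_neg hq.1, if_neg hq.2, mul_zero]
  · -- lower bound
    rintro c ⟨Δ, hΔ, rfl, lam, x, hxne, hx0, hmul⟩
    have hx0' : x i0 = 0 := hx0
    obtain ⟨i, hxi⟩ := Function.ne_iff.mp hxne
    have hxi : x i ≠ 0 := hxi
    have hi0' : (i : ℕ) ≠ 0 := by
      intro h
      exact hxi (by rw [show i = i0 from Fin.ext h]; exact hx0')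
    have hrow : ∀ k : Fin n, (k : ℕ) ≠ 0 → x k ≠ 0 → ((A k k + Δ k k : ℝ) : ℂ) = lam := by
      intro k hk hxk
      have h := congrFun hmul k
      simp only [Matrix.mulVec, dotProduct, Matrix.map_apply, Matrix.add_apply,
        Pi.smul_apply, smul_eq_mul] at h
      rw [Finset.sum_eq_single k] at h
      · exact mul_right_cancel₀ hxk h
      · intro b _ hbk
        by_cases hb0 : (b : ℕ) = 0
        · rw [show b = i0 from Fin.ext hb0, hx0', mul_zero]
        · rw [hstar k b (Ne.symm hbk) hk hb0, hΔ k b (Ne.symm hbk) hk hb0]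
          simp
      · simp
    by_cases hcase : ∃ j : Fin n, (j : ℕ) ≠ 0 ∧ j ≠ i ∧ x j ≠ 0
    · obtain ⟨j, hj0, hji, hxj⟩ := hcase
      have h1 := hrow i hi0' hxi
      have h2 := hrow j hj0 hxj
      have heq : A i i + Δ i i = A j j + Δ j j := by
        have h3 := h1.trans h2.symm
        exact_mod_cast h3
      have ht : |A i i - A j j| / Real.sqrt 2 ∈ S1 ∪ S2 :=
        Or.inr ⟨i, j, hi0', hj0, Ne.symm hji, rfl⟩
      refine le_trans (csInf_le hbdd ht) ?_
      calc |A i i - A j j| / Real.sqrt 2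
          = Real.sqrt ((A i i - A j j) ^ 2 / 2) := by
            rw [Real.sqrt_div (sq_nonneg _), Real.sqrt_sq_eq_abs]
        _ ≤ Real.sqrt (Δ i i ^ 2 + Δ j j ^ 2) := by
            apply Real.sqrt_le_sqrt
            have hd : A i i - A j j = Δ j j - Δ i i := by linarith
            rw [hd]
            nlinarith [sq_nonneg (Δ i i + Δ j j)]
        _ ≤ frobNorm Δ := two_diag_le_frob Δ (Ne.symm hji)
    · push_neg at hcase
      have h := congrFun hmul i0
      simp only [Matrix.mulVec, dotProduct, Matrix.map_apply, Matrix.add_apply,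
        Pi.smul_apply, smul_eq_mul] at h
      rw [Finset.sum_eq_single i, hx0', mul_zero] at h
      · have hzero : A i0 i + Δ i0 i = 0 := by
          have h4 := (mul_eq_zero.mp h).resolve_right hxi
          exact_mod_cast h4
        have ht : A i0 i ∈ S1 ∪ S2 := Or.inl ⟨i, hi0', rfl⟩
        refine le_trans (csInf_le hbdd ht) ?_
        have habs : A i0 i = |Δ i0 i| := by
          have hd : Δ i0 i = -(A i0 i) := by linarith
          rw [hd, abs_neg, abs_of_pos (hposRow i hi0')]
        rw [habs]
        exact entry_le_frob Δ i0 i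
      · intro b _ hbi
        by_cases hb0 : (b : ℕ) = 0
        · rw [show b = i0 from Fin.ext hb0, hx0', mul_zero]
        · rw [hcase b hb0 hbi, mul_zero]
      · simp
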